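/- Let M be as above with ∂M ≅ S^{n-1}, and let φ̄ = φ̄^{(0)}+⋯+φ̄^{(n−1)} satisfy conditions (1)–(3) of Lemma 5.1. Then there exists a unique closed n-form χ ∈ 𝒜^n(B Diff₀(∂M)^δ_•), i.e. a unique n-cocycle χ: Diff₀(∂M)^n → ℝ of group cohomology with trivial real coefficients, such that r^*χ = δφ̄^{(0)}, where r^* is precomposition with the boundary-restriction homomorphism in each variable. Explicitly, χ(γ₁,…,γₙ) is the constant value of δφ̄^{(0)}(g₁,…,gₙ) for any g_k ∈ Diff_{ω,0}(M) with g_k|_{∂M} = γ_k. -/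

import Mathlib

namespace TsuboiEuler

/-! ### Group cochains valued in a graded module of differential forms

For a group `G` acting on a manifold by diffeomorphisms, `GC G F k l` models the
space `𝒜^{k,l}` of maps `G^k → Ω^l(M)`; `GCT G F` is an element of the whole double
complex, recorded in every bidegree at once. -/

section GroupCochains

variable {G : Type} [Group G] {F : ℕ → Type} [∀ l, AddCommGroup (F l)]
  [∀ l, Module ℝ (F l)]

/-- The space `𝒜^{k,l}` of `k`-cochains of the group `G` valued in `l`-forms. -/
abbrev GC (G : Type) (F : ℕ → Type) (k l : ℕ) : Type := (Fin k → G) → F l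

variable (pull : ∀ l, G → F l →ₗ[ℝ] F l)
variable (dF : ∀ l, F l →ₗ[ℝ] F (l + 1))
variable (wedge : ∀ p q r : ℕ, p + q = r → F p → F q → F r)

/-- The horizontal (inhomogeneous group-cochain) differential
`δc(g₁,…,g_{k+1}) = c(g₂,…,g_{k+1}) + ∑ (-1)^i c(g₁,…,g_i g_{i+1},…,g_{k+1})
 + (-1)^{k+1} g_{k+1}^* c(g₁,…,g_k)`. -/
def gdel (k l : ℕ) (c : GC G F k l) : GC G F (k + 1) l := fun g =>
  c (fun i => g i.succ)
    + ∑ i : Fin k,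
        ((-1 : ℝ) ^ ((i : ℕ) + 1)) •
          c (fun j =>
              if (j : ℕ) < (i : ℕ) then g (Fin.castSucc j)
              else if (j : ℕ) = (i : ℕ) then g (Fin.castSucc j) * g j.succ
              else g j.succ)
    + ((-1 : ℝ) ^ (k + 1)) • pull l (g (Fin.last k)) (c (fun j => g (Fin.castSucc j)))

/-- The vertical differential `d'' = (-1)^k d` on `𝒜^{k,l}`. -/
def dvv (k l : ℕ) (c : GC G F k l) : GC G F k (l + 1) := fun g =>
  ((-1 : ℝ) ^ k) • dF l (c g)

/-- An element of the double complex `𝒜^{*,*}`, given by all of its bidegree components. -/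
abbrev GCT (G : Type) (F : ℕ → Type) : Type := ∀ k l : ℕ, GC G F k l

/-- The horizontal differential on the total complex. -/
def Dh (c : GCT G F) : GCT G F := fun k l =>
  match k with
  | 0 => 0
  | k + 1 => gdel pull k l (c k l)

/-- The vertical differential on the total complex. -/
def Dv (c : GCT G F) : GCT G F := fun k l =>
  match l with
  | 0 => 0
  | l + 1 => dvv dF k l (c k l)

/-- The total differential `d = δ + d''`. -/
def DT (c : GCT G F) : GCT G F := Dh pull c + Dv dF c

/-- `c` is concentrated in total degree `m`. -/
def IsDeg (m : ℕ) (c : GCT G F) : Prop := ∀ k l, k + l ≠ m → c k l = 0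

/-- The wedge product
`(α∧β)(g₁,…,g_{p+r}) = (g_{p+1}⋯g_{p+r})^* α(g₁,…,g_p) ∧ β(g_{p+1},…,g_{p+r})`
of `α ∈ 𝒜^{p,q}` and `β ∈ 𝒜^{r,s}`. -/
def cwedge {p q r s k l : ℕ} (h1 : p + r = k) (h2 : q + s = l)
    (α : GC G F p q) (β : GC G F r s) : GC G F k l := fun g =>
  wedge q s l h2
    (pull q ((List.ofFn fun i : Fin r => g (Fin.cast h1 (Fin.natAdd p i))).prod)
      (α fun i => g (Fin.cast h1 (Fin.castAdd r i))))
    (β fun i => g (Fin.cast h1 (Fin.natAdd p i)))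

/-- The wedge product on the total complex. -/
def tmulC (c c' : GCT G F) : GCT G F := fun k l =>
  ∑ p ∈ (Finset.range (k + 1)).attach, ∑ q ∈ (Finset.range (l + 1)).attach,
    cwedge pull wedge
      (Nat.add_sub_cancel' (Nat.lt_succ_iff.mp (Finset.mem_range.mp p.2)))
      (Nat.add_sub_cancel' (Nat.lt_succ_iff.mp (Finset.mem_range.mp q.2)))
      (c p.1 q.1) (c' (k - p.1) (l - q.1))

end GroupCochains

/-! ### Group cohomology with trivial real coefficients -/

section RealCochains

variable {G : Type} [Group G]

/-- The inhomogeneous group-cochain differential with trivial real coefficients. -/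
def rdel (k : ℕ) (c : (Fin k → G) → ℝ) : (Fin (k + 1) → G) → ℝ := fun g =>
  c (fun i => g i.succ)
    + ∑ i : Fin k,
        ((-1 : ℝ) ^ ((i : ℕ) + 1)) •
          c (fun j =>
              if (j : ℕ) < (i : ℕ) then g (Fin.castSucc j)
              else if (j : ℕ) = (i : ℕ) then g (Fin.castSucc j) * g j.succ
              else g j.succ)
    + ((-1 : ℝ) ^ (k + 1)) • c (fun j => g (Fin.castSucc j))

/-- `u` is a coboundary of real group cochains. -/
def IsCobdryR (k : ℕ) (u : (Fin k → G) → ℝ) : Prop :=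
  ∃ (j : ℕ) (h : j + 1 = k) (w : (Fin j → G) → ℝ), u = fun g => rdel j w (g ∘ Fin.cast h)

/-- The cohomology class of the cochain `u` in `H^k(BG^δ; ℝ)` vanishes. -/
def ClassZeroR (k : ℕ) (u : (Fin k → G) → ℝ) : Prop := u = 0 ∨ IsCobdryR k u

/-- `u` and `v` represent the same class in `H^k(BG^δ; ℝ)`. -/
def CohomologousR (k : ℕ) (u v : (Fin k → G) → ℝ) : Prop := ClassZeroR k (u - v)

end RealCochains

/-! ### Abstract geometric data for `(M, ∂M ≅ S^{n-1}, ω)` together with the groups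
`Diff_{ω,0}(M)`, `Diff₀(∂M)` and `Diff_{ω,0}(M,∂M)`.

`FullGeom n` records the de Rham complexes of a compact connected oriented
`n`-manifold `M` with boundary `∂M`, the restriction `i^* : Ω^*(M) → Ω^*(∂M)`,
integration, a volume form `ω`, the group `GM` (modelling `Diff_{ω,0}(M)`), the
group `Gb` (modelling `Diff₀(∂M)`), the boundary-restriction homomorphism
`r : GM → Gb` (which is surjective: every boundary diffeomorphism extends), and the
subgroup `Grel ≤ GM` (modelling `Diff_{ω,0}(M,∂M)`), contained in the kernel of
`r`. -/

structure FullGeom (n : ℕ) where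
  /-- `Ω^l(M)` -/
  Fm : ℕ → Type
  [acg : ∀ l, AddCommGroup (Fm l)]
  [mod : ∀ l, Module ℝ (Fm l)]
  /-- exterior derivative -/
  dF : ∀ l, Fm l →ₗ[ℝ] Fm (l + 1)
  dF_dF : ∀ (l) (α : Fm l), dF (l + 1) (dF l α) = 0
  /-- wedge product -/
  wedge : ∀ p q r : ℕ, p + q = r → Fm p → Fm q → Fm r
  wedge_add_left : ∀ (p q r) (h : p + q = r) (α α' : Fm p) (β : Fm q),
    wedge p q r h (α + α') β = wedge p q r h α β + wedge p q r h α' β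
  wedge_add_right : ∀ (p q r) (h : p + q = r) (α : Fm p) (β β' : Fm q),
    wedge p q r h α (β + β') = wedge p q r h α β + wedge p q r h α β'
  wedge_smul_left : ∀ (p q r) (h : p + q = r) (a : ℝ) (α : Fm p) (β : Fm q),
    wedge p q r h (a • α) β = a • wedge p q r h α β
  wedge_smul_right : ∀ (p q r) (h : p + q = r) (a : ℝ) (α : Fm p) (β : Fm q),
    wedge p q r h α (a • β) = a • wedge p q r h α β
  wedge_comm : ∀ (p q r) (h : p + q = r) (h' : q + p = r) (α : Fm p) (β : Fm q),
    wedge p q r h α β = ((-1 : ℝ) ^ (p * q)) • wedge q p r h' β α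
  dF_wedge : ∀ (p q r) (h : p + q = r) (hp : p + 1 + q = r + 1) (hq : p + (q + 1) = r + 1)
    (α : Fm p) (β : Fm q),
    dF r (wedge p q r h α β)
      = wedge (p + 1) q (r + 1) hp (dF p α) β
        + ((-1 : ℝ) ^ p) • wedge p (q + 1) (r + 1) hq α (dF q β)
  /-- forms of degree `> n` vanish -/
  top : ∀ l, n < l → ∀ α : Fm l, α = 0
  /-- the constant function `1 ∈ Ω^0(M)` -/
  oneF : Fm 0
  dF_oneF : dF 0 oneF = 0
  oneF_wedge : ∀ (q) (α : Fm q), wedge 0 q q (Nat.zero_add q) oneF α = α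
  /-- `M` is connected: closed `0`-forms are constants -/
  connM : ∀ α : Fm 0, dF 0 α = 0 → ∃ a : ℝ, α = a • oneF
  /-- `Ω^l(∂M)` -/
  FmB : ℕ → Type
  [acgB : ∀ l, AddCommGroup (FmB l)]
  [modB : ∀ l, Module ℝ (FmB l)]
  dB : ∀ l, FmB l →ₗ[ℝ] FmB (l + 1)
  dB_dB : ∀ (l) (β : FmB l), dB (l + 1) (dB l β) = 0
  /-- restriction `i^*` to the boundary -/
  res : ∀ l, Fm l →ₗ[ℝ] FmB l
  res_dF : ∀ (l) (α : Fm l), res (l + 1) (dF l α) = dB l (res l α)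
  /-- the constant function `1 ∈ Ω^0(∂M)` -/
  oneB : FmB 0
  res_oneF : res 0 oneF = oneB
  /-- `∂M` is connected -/
  connB : ∀ β : FmB 0, dB 0 β = 0 → ∃ a : ℝ, β = a • oneB
  /-- integration of top forms over `M` -/
  intM : Fm n →ₗ[ℝ] ℝ
  /-- integration over the boundary sphere -/
  intB : ∀ l, l + 1 = n → FmB l →ₗ[ℝ] ℝ
  /-- Stokes' formula -/
  stokes : ∀ (l) (h : l + 1 = n) (α : Fm l),
    intM (cast (congrArg Fm h) (dF l α)) = intB l h (res l α)
  /-- the group `Diff_{ω,0}(M)` of volume-preserving diffeomorphisms of `M` -/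
  GM : Type
  [grpM : Group GM]
  pull : ∀ l, GM → Fm l →ₗ[ℝ] Fm l
  pull_one : ∀ (l) (α : Fm l), pull l 1 α = α
  pull_mul : ∀ (l) (g h : GM) (α : Fm l), pull l (g * h) α = pull l h (pull l g α)
  pull_dF : ∀ (l) (g : GM) (α : Fm l), dF l (pull l g α) = pull (l + 1) g (dF l α)
  pull_wedge : ∀ (p q r) (h : p + q = r) (g : GM) (α : Fm p) (β : Fm q),
    pull r g (wedge p q r h α β) = wedge p q r h (pull p g α) (pull q g β)
  pull_oneF : ∀ g : GM, pull 0 g oneF = oneF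
  intM_pull : ∀ (g : GM) (α : Fm n), intM (pull n g α) = intM α
  /-- the group `Diff₀(∂M)` of orientation-preserving diffeomorphisms of `∂M ≅ S^{n-1}` -/
  Gb : Type
  [grpB : Group Gb]
  pullB : ∀ l, Gb → FmB l →ₗ[ℝ] FmB l
  pullB_one : ∀ (l) (β : FmB l), pullB l 1 β = β
  pullB_mul : ∀ (l) (γ γ' : Gb) (β : FmB l), pullB l (γ * γ') β = pullB l γ' (pullB l γ β)
  pullB_dB : ∀ (l) (γ : Gb) (β : FmB l), dB l (pullB l γ β) = pullB (l + 1) γ (dB l β)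
  pullB_oneB : ∀ γ : Gb, pullB 0 γ oneB = oneB
  intB_pullB : ∀ (l) (h : l + 1 = n) (γ : Gb) (β : FmB l),
    intB l h (pullB l γ β) = intB l h β
  /-- restriction of diffeomorphisms to the boundary -/
  rHom : GM →* Gb
  /-- every orientation-preserving diffeomorphism of `∂M` extends to `M` -/
  rHom_surj : Function.Surjective rHom
  res_pull : ∀ (l) (g : GM) (α : Fm l), res l (pull l g α) = pullB l (rHom g) (res l α)
  /-- the subgroup `Diff_{ω,0}(M,∂M)` of diffeomorphisms fixing `∂M` pointwise -/
  Grel : Subgroup GM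
  rHom_Grel : ∀ g ∈ Grel, rHom g = 1
  /-- the volume form `ω` -/
  ωM : Fm n
  pull_ωM : ∀ g : GM, pull n g ωM = ωM
  vol_pos : 0 < intM ωM

attribute [instance] FullGeom.acg FullGeom.mod FullGeom.acgB FullGeom.modB
  FullGeom.grpM FullGeom.grpB

namespace FullGeom

variable {n : ℕ} (D : FullGeom n)

/-- The action of the subgroup `Diff_{ω,0}(M,∂M)` on forms. -/
def pullRel : ∀ l, D.Grel → D.Fm l →ₗ[ℝ] D.Fm l := fun l g => D.pull l (g : D.GM)

/-- `ω^{(n)}` as an element of the double complex of `Diff_{ω,0}(M)`-cochains. -/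
def omCM : GCT D.GM D.Fm := fun k l _ =>
  if h : k = 0 ∧ l = n then cast (congrArg D.Fm h.2.symm) D.ωM else 0

/-- `ω^{(n)}` as an element of the double complex of `Diff_{ω,0}(M,∂M)`-cochains. -/
def omCRel : GCT D.Grel D.Fm := fun k l _ =>
  if h : k = 0 ∧ l = n then cast (congrArg D.Fm h.2.symm) D.ωM else 0

/-- `φ` is as in the definition of `c(M)`: total degree `n-1`, `dφ = ω^{(n)}`, and
components of form degree `≤ n-2` pull back to `0` on `∂M`. -/
def AdmissibleRel (φ : GCT D.Grel D.Fm) : Prop :=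
  IsDeg (n - 1) φ ∧ DT D.pullRel D.dF φ = D.omCRel ∧
    ∀ k l, l + 2 ≤ n → ∀ g : Fin k → D.Grel, D.res l (φ k l g) = 0

/-- The cocycle `(g₁,…,g_{n-1}) ↦ ∫_M φ^{(0)}(g₁,…,g_{n-1}) ∧ ω` representing
`c(M)`. -/
def uRel (φ : GCT D.Grel D.Fm) : (Fin (n - 1) → D.Grel) → ℝ := fun g =>
  D.intM (D.wedge 0 n n (Nat.zero_add n) (φ (n - 1) 0 g) D.ωM)

/-- Conditions (1)–(3) of Lemma 5.1 on `φ̄ ∈ 𝒜^{n-1}(M Diff_{ω,0}(M)^δ_•)`: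
(1) `dφ̄ = ω̄^{(n)} + δφ̄^{(0)}`;
(2) `φ̄^{(l)}(g₁,…,g_{n-l-1})` pulls back to `0` on `∂M` for `l < n-1` whenever all
`gᵢ ∈ Diff_{ω,0}(M,∂M)`;
(3) for `l < n-1`, `i^* φ̄^{(l)}(g₁,…,g_{n-l-1})` only depends on the restrictions
`gᵢ|_{∂M}`. -/
def BarPhi (φb : GCT D.GM D.Fm) : Prop :=
  IsDeg (n - 1) φb ∧
  DT D.pull D.dF φb
      = D.omCM + (fun k l => if k = n ∧ l = 0 then Dh D.pull φb k l else 0) ∧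
  (∀ k l, l + 2 ≤ n → ∀ g : Fin k → D.GM, (∀ i, g i ∈ D.Grel) →
      D.res l (φb k l g) = 0) ∧
  (∀ k l, l + 2 ≤ n → ∀ g h : Fin k → D.GM, (∀ i, D.rHom (g i) = D.rHom (h i)) →
      D.res l (φb k l g) = D.res l (φb k l h))

/-- The cochain `u = ∫_M φ̄^{(0)} ∧ ω̄^{(n)}` on `Diff_{ω,0}(M)`. -/
def uBar (φb : GCT D.GM D.Fm) : (Fin (n - 1) → D.GM) → ℝ := fun g =>
  D.intM (D.wedge 0 n n (Nat.zero_add n) (φb (n - 1) 0 g) D.ωM)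

/-- `χ` is the `n`-cochain of `Diff₀(∂M)` with `r^*χ = δφ̄^{(0)}`; here
`δφ̄^{(0)}(g₁,…,g_n)` is a constant function on `M` and `r^*χ = δφ̄^{(0)}` means
that this constant equals `χ(g₁|_{∂M},…,g_n|_{∂M})`. -/
def IsChi (φb : GCT D.GM D.Fm) (χ : (Fin n → D.Gb) → ℝ) : Prop :=
  ∀ g : Fin n → D.GM, Dh D.pull φb n 0 g = χ (fun i => D.rHom (g i)) • D.oneF

/-- A zig-zag `ψ̄ = ψ̄^{(0)} + ⋯ + ψ̄^{(n-1)}` in the double complex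
`𝒜^{*,*}(S^{n-1} Diff₀(S^{n-1})^δ_•)` starting from a closed `(n-1)`-form
`ψ̄^{(n-1)} ∈ Ω^{n-1}(S^{n-1})` of total integral `1`, i.e. representing the
generator `α ∈ E_n^{0,n-1} ≅ H^{n-1}(S^{n-1})`; by definition of the Euler class
`[−δψ̄^{(0)}] = e` (since `d_n(α) = [δψ̄^{(0)}]` and `e = −d_n(α)`). -/
def UnitZigZag (ψ : GCT D.Gb D.FmB) : Prop :=
  IsDeg (n - 1) ψ ∧ (∀ k l, 1 ≤ l → DT D.pullB D.dB ψ k l = 0) ∧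
    ∀ h : n - 1 + 1 = n, D.intB (n - 1) h (ψ 0 (n - 1) Fin.elim0) = 1

/-- `w` is a real `n`-cocycle of `Diff₀(S^{n-1})` with `δψ̄^{(0)} = w · 1` for a unit
zig-zag `ψ̄`; by the spectral-sequence definition of the Euler class of foliated
`S^{n-1}`-bundles, the class of `-w` equals the Euler class `e`. -/
def EulerFrom (ψ : GCT D.Gb D.FmB) (w : (Fin n → D.Gb) → ℝ) : Prop :=
  D.UnitZigZag ψ ∧ ∀ g : Fin n → D.Gb, Dh D.pullB ψ n 0 g = w g • D.oneB

/-- `H^l(M,∂M;ℝ) = 0` for `0 < l < n` and `H^0(M,∂M;ℝ) = 0`. -/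
def RelAcyclic : Prop :=
  (∀ α : D.Fm 0, D.dF 0 α = 0 → D.res 0 α = 0 → α = 0) ∧
    ∀ l, l + 1 < n → ∀ α : D.Fm (l + 1), D.dF (l + 1) α = 0 → D.res (l + 1) α = 0 →
      ∃ β : D.Fm l, D.res l β = 0 ∧ D.dF l β = α

/-- `H^l(M;ℝ) = 0` for `0 < l < n`, and `H^n(M;ℝ) = 0` (so that `ω` is exact);
these follow from `H^l(M,∂M;ℝ) = 0` and `∂M ≅ S^{n-1}`. -/
def AbsAcyclic : Prop :=
  (∀ l, l + 1 < n → ∀ α : D.Fm (l + 1), D.dF (l + 1) α = 0 →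
      ∃ β : D.Fm l, D.dF l β = α) ∧
    ∃ β : D.Fm (n - 1), ∀ h : n - 1 + 1 = n,
      cast (congrArg D.Fm h) (D.dF (n - 1) β) = D.ωM

/-- The boundary is the sphere `S^{n-1}`: `H^l(∂M;ℝ) = 0` for `0 < l < n-1`. -/
def SphereBoundary : Prop :=
  ∀ l, l + 2 < n → ∀ β : D.FmB (l + 1), D.dB (l + 1) β = 0 →
    ∃ γ : D.FmB l, D.dB l γ = β

/-- `i^* : Ω^l(M) → Ω^l(∂M)` is surjective. -/
def ResSurj : Prop := ∀ l, Function.Surjective (D.res l)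

end FullGeom


section GdelSqAux

variable {G : Type} [Group G] {V : Type} [AddCommGroup V] [Module ℝ V]

/-- Single-module version of the inhomogeneous group differential. -/
def gd (π : G → V →ₗ[ℝ] V) (k : ℕ) (c : (Fin k → G) → V) : (Fin (k + 1) → G) → V := fun g =>
  c (fun i => g i.succ)
    + ∑ i : Fin k,
        ((-1 : ℝ) ^ ((i : ℕ) + 1)) •
          c (fun j =>
              if (j : ℕ) < (i : ℕ) then g (Fin.castSucc j)
              else if (j : ℕ) = (i : ℕ) then g (Fin.castSucc j) * g j.succ
              else g j.succ)
    + ((-1 : ℝ) ^ (k + 1)) • π (g (Fin.last k)) (c (fun j => g (Fin.castSucc j)))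

lemma mrg_eq_contractNth (k : ℕ) (g : Fin (k + 1) → G) (i : Fin k) :
    (fun j : Fin k =>
        if (j : ℕ) < (i : ℕ) then g (Fin.castSucc j)
        else if (j : ℕ) = (i : ℕ) then g (Fin.castSucc j) * g j.succ
        else g j.succ)
      = Fin.contractNth i.castSucc (· * ·) g := by
  funext j
  simp [Fin.contractNth]

lemma prod_ofFn_contractNth {G : Type} [Monoid G] :
    ∀ {k : ℕ} (g : Fin (k + 1) → G) (i : Fin k),
      (List.ofFn (Fin.contractNth i.castSucc (· * ·) g)).prod = (List.ofFn g).prod := by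
  intro k
  induction k with
  | zero => exact fun g i => i.elim0
  | succ m ih =>
    intro g i
    induction i using Fin.cases with
    | zero =>
      rw [List.ofFn_succ, List.prod_cons, List.ofFn_succ, List.prod_cons,
        List.ofFn_succ (f := fun i : Fin (m + 1) => g i.succ), List.prod_cons]
      have h0 : Fin.contractNth (Fin.castSucc 0) (· * ·) g 0 = g 0 * g 1 := by
        rw [Fin.contractNth_apply_of_eq _ _ _ _ (by simp)]
        simp
      have hs : ∀ j : Fin m,
          Fin.contractNth (Fin.castSucc 0) (· * ·) g j.succ = g j.succ.succ := by
        intro j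
        rw [Fin.contractNth_apply_of_gt _ _ _ _ (by simp)]
      simp only [h0, hs]
      rw [mul_assoc]
      simp [Fin.succ_zero_eq_one]
    | succ i' =>
      rw [List.ofFn_succ, List.prod_cons, List.ofFn_succ (f := g), List.prod_cons]
      have h0 : Fin.contractNth (Fin.castSucc i'.succ) (· * ·) g 0 = g 0 := by
        rw [Fin.contractNth_apply_of_lt _ _ _ _ (by simp)]
        simp
      rw [h0]
      congr 1
      have ht : (fun j : Fin m => Fin.contractNth (Fin.castSucc i'.succ) (· * ·) g j.succ)
          = Fin.contractNth i'.castSucc (· * ·) (fun j => g j.succ) := by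
        funext j
        rcases lt_trichotomy (j : ℕ) (i' : ℕ) with h | h | h
        · rw [Fin.contractNth_apply_of_lt _ _ _ _ (by simp; omega),
            Fin.contractNth_apply_of_lt _ _ _ _ (by simpa using h), Fin.succ_castSucc]
        · rw [Fin.contractNth_apply_of_eq _ _ _ _ (by simp; omega),
            Fin.contractNth_apply_of_eq _ _ _ _ (by simpa using h), Fin.succ_castSucc]
        · rw [Fin.contractNth_apply_of_gt _ _ _ _ (by simp; omega),
            Fin.contractNth_apply_of_gt _ _ _ _ (by simpa using h)]
      rw [ht, ih]

/-- The left representation `g ↦ π g⁻¹` associated to a right action `π`. -/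
def repOfPull (π : G → V →ₗ[ℝ] V) (hπ1 : ∀ x, π 1 x = x)
    (hπm : ∀ g h x, π (g * h) x = π h (π g x)) : Representation ℝ G V where
  toFun g := π g⁻¹
  map_one' := by ext x; simp [hπ1]
  map_mul' g h := by
    ext x
    simp only [mul_inv_rev, Module.End.mul_apply]
    exact hπm h⁻¹ g⁻¹ x

variable (π : G → V →ₗ[ℝ] V) (hπ1 : ∀ x, π 1 x = x)
  (hπm : ∀ g h x, π (g * h) x = π h (π g x))

/-- The twist intertwining right- and left- inhomogeneous differentials. -/
def twist (m : ℕ) (c : (Fin m → G) → V) : (Fin m → G) → V := fun g =>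
  π ((List.ofFn g).prod)⁻¹ (c g)

lemma twist_gd (m : ℕ) (c : (Fin m → G) → V) :
    twist π (m + 1) (gd π m c)
      = (inhomogeneousCochains.d (Rep.of (repOfPull π hπ1 hπm)) m).hom (twist π m c) := by
  funext g
  rw [inhomogeneousCochains.d_hom_apply]
  rw [Fin.sum_univ_castSucc]
  have hρ : ∀ (a : G) (x : V),
      ((Rep.of (repOfPull π hπ1 hπm)).ρ a) x = π a⁻¹ x := fun a x => rfl
  have hcontr_last : Fin.contractNth (Fin.last m) (· * ·) g = fun j => g (Fin.castSucc j) := by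
    funext j
    rw [Fin.contractNth_apply_of_lt _ _ _ _ (by simpa using j.isLt)]
  simp only [twist, gd, map_add, map_sum, map_smul, hρ, hcontr_last]
  rw [add_assoc]
  congr 1
  · -- first terms
    rw [← hπm]
    congr 2
    rw [List.ofFn_succ, List.prod_cons, mul_inv_rev]
  congr 1
  · -- middle sums
    refine Finset.sum_congr rfl fun i _ => ?_
    simp only [Fin.coe_castSucc]
    rw [prod_ofFn_contractNth g i, ← mrg_eq_contractNth]
  · -- last terms
    simp only [Fin.val_last]
    congr 1
    rw [← hπm]
    congr 2
    rw [List.ofFn_succ' g, List.prod_concat, mul_inv_rev, ← mul_assoc, mul_inv_cancel,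
      one_mul]

include hπ1 hπm in
lemma twist_eq_zero (m : ℕ) (c : (Fin m → G) → V) (h : twist π m c = 0) : c = 0 := by
  funext g
  have h1 := congrFun h g
  have h2 := congrArg (π ((List.ofFn g).prod)) h1
  simp only [twist, Pi.zero_apply, map_zero] at h2
  rw [← hπm, inv_mul_cancel, hπ1] at h2
  simpa using h2

include hπ1 hπm in
lemma gd_gd (k : ℕ) (c : (Fin k → G) → V) : gd π (k + 1) (gd π k c) = 0 := by
  apply twist_eq_zero π hπ1 hπm
  rw [twist_gd π hπ1 hπm, twist_gd π hπ1 hπm]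
  set A := Rep.of (repOfPull π hπ1 hπm)
  have h := groupCohomology.inhomogeneousCochains.d_comp_d (A := A) (n := k)
  exact congrArg (fun f => f.hom (twist π k c)) h

lemma map_gd {W : Type} [AddCommGroup W] [Module ℝ W] (π' : G → W →ₗ[ℝ] W)
    (T : V →ₗ[ℝ] W) (hc : ∀ g x, T (π g x) = π' g (T x)) (k : ℕ)
    (c : (Fin k → G) → V) (g : Fin (k + 1) → G) :
    T (gd π k c g) = gd π' k (fun t => T (c t)) g := by
  simp [gd, hc]

lemma gd_smul (a : ℝ) (k : ℕ) (c : (Fin k → G) → V) (g : Fin (k + 1) → G) :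
    gd π k (fun t => a • c t) g = a • gd π k c g := by
  simp [gd, map_smul, smul_add, Finset.smul_sum, smul_smul, mul_comm]

lemma gd_congr (k : ℕ) (c c' : (Fin k → G) → V) (h : ∀ t, c t = c' t) (g : Fin (k + 1) → G) :
    gd π k c g = gd π k c' g := by
  have : c = c' := funext h
  rw [this]

end GdelSqAux



/-! ### Auxiliary lemmas for the main theorem -/

section MainAux

lemma closed_aux (K : ℕ) (D : FullGeom (K + 1)) (φb : GCT D.GM D.Fm)
    (e1 : Dh D.pull φb K 1 + dvv D.dF K 0 (φb K 0) = D.omCM K 1) :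
    ∀ g : Fin (K + 1) → D.GM, D.dF 0 (gd (D.pull 0) K (φb K 0) g) = 0 := by
  cases K with
  | zero =>
    intro g
    have hd : ∀ t : Fin 0 → D.GM, D.dF 0 (φb 0 0 t) = D.omCM 0 1 t := by
      intro t
      have h := congrFun e1 t
      simpa [Dh, dvv, Pi.add_apply] using h
    have hω : ∀ t : Fin 0 → D.GM, D.omCM 0 1 t = D.ωM := by
      intro t
      simp [FullGeom.omCM]
    have hexp : gd (D.pull 0) 0 (φb 0 0) g
        = φb 0 0 (fun i => g i.succ)
          - D.pull 0 (g (Fin.last 0)) (φb 0 0 (fun j => g (Fin.castSucc j))) := by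
      simp [gd, sub_eq_add_neg]
    rw [hexp, map_sub, hd, D.pull_dF, hd, hω, hω, D.pull_ωM, sub_self]
  | succ J =>
    intro g
    have hd : ∀ t : Fin (J + 1) → D.GM,
        D.dF 0 (φb (J + 1) 0 t)
          = ((-1 : ℝ) ^ (J + 2)) • gd (D.pull 1) J (φb J 1) t := by
      intro t
      have h := congrFun e1 t
      have homega : D.omCM (J + 1) 1 t = 0 := by simp [FullGeom.omCM]
      rw [Pi.add_apply, homega] at h
      have h' : gd (D.pull 1) J (φb J 1) t
          + ((-1 : ℝ) ^ (J + 1)) • D.dF 0 (φb (J + 1) 0 t) = 0 := h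
      have hsq : ((-1 : ℝ) ^ (J + 1)) * ((-1 : ℝ) ^ (J + 1)) = 1 := by
        rw [← mul_pow]; norm_num
      have h2' := congrArg (fun x => ((-1 : ℝ) ^ (J + 1)) • x) h'
      simp only [smul_add, smul_smul, hsq, one_smul, smul_zero] at h2'
      have h3' := eq_neg_of_add_eq_zero_left h2'
      have h4' : (D.dF 0) (φb (J + 1) 0 t)
          = -(((-1 : ℝ) ^ (J + 1)) • gd (D.pull 1) J (φb J 1) t) := by
        rw [h3', neg_neg]
      rw [h4', ← neg_smul]
      congr 1
      rw [pow_succ]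
      ring
    calc D.dF 0 (gd (D.pull 0) (J + 1) (φb (J + 1) 0) g)
        = gd (D.pull 1) (J + 1) (fun t => D.dF 0 (φb (J + 1) 0 t)) g :=
          map_gd (D.pull 0) (D.pull 1) (D.dF 0) (fun a x => D.pull_dF 0 a x) (J + 1) _ g
      _ = gd (D.pull 1) (J + 1)
            (fun t => ((-1 : ℝ) ^ (J + 2)) • gd (D.pull 1) J (φb J 1) t) g :=
          gd_congr _ _ _ _ (fun t => hd t) g
      _ = ((-1 : ℝ) ^ (J + 2)) • gd (D.pull 1) (J + 1) (gd (D.pull 1) J (φb J 1)) g :=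
          gd_smul _ _ _ _ g
      _ = 0 := by
          rw [gd_gd (D.pull 1) (fun x => D.pull_one 1 x) (fun a b x => D.pull_mul 1 a b x)
            J (φb J 1)]
          simp

lemma resdep_aux (K : ℕ) (D : FullGeom (K + 1)) (φb : GCT D.GM D.Fm)
    (h3 : ∀ k l, l + 2 ≤ K + 1 → ∀ g h : Fin k → D.GM,
      (∀ i, D.rHom (g i) = D.rHom (h i)) → D.res l (φb k l g) = D.res l (φb k l h)) :
    ∀ g h : Fin (K + 1) → D.GM, (∀ i, D.rHom (g i) = D.rHom (h i)) →
      D.res 0 (gd (D.pull 0) K (φb K 0) g) = D.res 0 (gd (D.pull 0) K (φb K 0) h) := by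
  cases K with
  | zero =>
    intro g h' hgh
    have he : ∀ u v : Fin 0 → D.GM, u = v := fun u v => funext fun i => i.elim0
    simp only [gd, map_add, map_smul, D.res_pull, Finset.univ_eq_empty, Finset.sum_empty,
      map_zero, add_zero]
    rw [hgh (Fin.last 0), he (fun i => g i.succ) (fun i => h' i.succ),
      he (fun j => g (Fin.castSucc j)) (fun j => h' (Fin.castSucc j))]
  | succ J =>
    intro g h' hgh
    have hcond : (0 : ℕ) + 2 ≤ J + 1 + 1 := by omega
    simp only [gd, map_add, map_smul, map_sum, D.res_pull]
    congr 1
    · congr 1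
      · exact h3 (J + 1) 0 hcond _ _ (fun i => hgh i.succ)
      · refine Finset.sum_congr rfl fun i _ => ?_
        congr 1
        refine h3 (J + 1) 0 hcond _ _ ?_
        intro j
        split_ifs
        · exact hgh _
        · rw [map_mul, map_mul, hgh, hgh]
        · exact hgh _
    · rw [hgh (Fin.last (J + 1))]
      congr 1
      exact congrArg _ (h3 (J + 1) 0 hcond _ _ (fun i => hgh (Fin.castSucc i)))

end MainAux

/-! ### STATEMENT 11 (Lemma 5.2)

Let `φ̄` satisfy conditions (1)–(3) of Lemma 5.1.  Then there is a unique closed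
`n`-form `χ ∈ 𝒜^n(B Diff₀(∂M)^δ_•)`, i.e. a unique `n`-cocycle
`χ : Diff₀(∂M)^n → ℝ` of group cohomology with trivial real coefficients, such that
`r^*χ = δφ̄^{(0)}`: explicitly, `χ(γ₁,…,γₙ)` is the constant value of
`δφ̄^{(0)}(g₁,…,gₙ)` for any extensions `gₖ ∈ Diff_{ω,0}(M)` of the `γₖ`. -/

theorem exists_unique_chi (n : ℕ) (hn : 1 ≤ n) (D : FullGeom n)
    (hrel : D.RelAcyclic) (habs : D.AbsAcyclic) (hsph : D.SphereBoundary)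
    (hsurj : D.ResSurj)
    (φb : GCT D.GM D.Fm) (hφb : D.BarPhi φb) :
    ∃ χ : (Fin n → D.Gb) → ℝ,
      D.IsChi φb χ ∧ rdel n χ = 0 ∧
        ∀ χ' : (Fin n → D.Gb) → ℝ, D.IsChi φb χ' → χ' = χ := by
  classical
  obtain ⟨K, rfl⟩ : ∃ K, n = K + 1 := ⟨n - 1, (Nat.succ_pred_eq_of_pos hn).symm⟩
  obtain ⟨hdeg, hDT, h2, h3⟩ := hφb
  -- `1 ∈ Ω⁰(M)` is nonzero
  have honeF : D.oneF ≠ 0 := by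
    intro h0
    have h1 : D.wedge 0 (K + 1) (K + 1) (Nat.zero_add _) D.oneF D.ωM = D.ωM :=
      D.oneF_wedge _ _
    have hw := D.wedge_smul_left 0 (K + 1) (K + 1) (Nat.zero_add _) 0 D.oneF D.ωM
    rw [zero_smul, zero_smul] at hw
    rw [h0, hw] at h1
    have := D.vol_pos
    rw [← h1, map_zero] at this
    exact lt_irrefl _ this
  have hsmul_inj : ∀ a b : ℝ, a • D.oneF = b • D.oneF → a = b := by
    intro a b h
    by_contra hne
    have h' : (a - b) • D.oneF = 0 := by rw [sub_smul, h, sub_self]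
    have h'' := congrArg (fun x => (a - b)⁻¹ • x) h'
    simp only [smul_smul, inv_mul_cancel₀ (sub_ne_zero.mpr hne), one_smul, smul_zero] at h''
    exact honeF h''
  -- the component equation of `dφ̄ = ω̄ + δφ̄⁰` in bidegree `(K,1)`
  have e1 : Dh D.pull φb K 1 + dvv D.dF K 0 (φb K 0) = D.omCM K 1 := by
    have h := congrFun (congrFun hDT K) 1
    have hne : ¬(K = K + 1 ∧ (1 : ℕ) = 0) := by omega
    simp only [DT, Pi.add_apply, if_neg hne, add_zero] at h
    exact h
  have hDh : Dh D.pull φb (K + 1) 0 = gd (D.pull 0) K (φb K 0) := rfl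
  have closed := closed_aux K D φb e1
  have resdep := resdep_aux K D φb h3
  have hconst : ∀ g : Fin (K + 1) → D.GM,
      ∃ a : ℝ, gd (D.pull 0) K (φb K 0) g = a • D.oneF :=
    fun g => D.connM _ (closed g)
  choose cval hcval using hconst
  have welldef : ∀ g h' : Fin (K + 1) → D.GM, (∀ i, D.rHom (g i) = D.rHom (h' i)) →
      cval g = cval h' := by
    intro g h' hgh
    have hβ : gd (D.pull 0) K (φb K 0) g - gd (D.pull 0) K (φb K 0) h' = 0 := by
      apply hrel.1
      · rw [map_sub, closed, closed, sub_self]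
      · rw [map_sub, resdep g h' hgh, sub_self]
    refine hsmul_inj _ _ ?_
    rw [← hcval, ← hcval]
    exact sub_eq_zero.mp hβ
  have hs : ∀ γ, D.rHom (Function.surjInv D.rHom_surj γ) = γ :=
    fun γ => Function.surjInv_eq D.rHom_surj γ
  refine ⟨fun γ => cval (fun i => Function.surjInv D.rHom_surj (γ i)), ?_, ?_, ?_⟩
  · -- `r^* χ = δφ̄⁰`
    intro g
    show gd (D.pull 0) K (φb K 0) g
      = cval (fun i => Function.surjInv D.rHom_surj (D.rHom (g i))) • D.oneF
    rw [hcval g]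
    congr 1
    exact welldef _ _ (fun i => by rw [hs])
  · -- `χ` is a cocycle
    funext γ
    set Φ := gd (D.pull 0) K (φb K 0) with hΦ
    have hzero : gd (D.pull 0) (K + 1) Φ
        (fun i => Function.surjInv D.rHom_surj (γ i)) = 0 :=
      congrFun (gd_gd (D.pull 0) (fun x => D.pull_one 0 x)
        (fun a b x => D.pull_mul 0 a b x) K (φb K 0)) _
    have key : ∀ (t : Fin (K + 1) → D.GM) (τ : Fin (K + 1) → D.Gb),
        (∀ i, D.rHom (t i) = τ i) →
        Φ t
          = cval (fun i => Function.surjInv D.rHom_surj (τ i)) • D.oneF := by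
      intro t τ h
      rw [hcval t]
      congr 1
      exact welldef _ _ (fun i => by rw [h i, hs])
    show rdel (K + 1) (fun τ => cval (fun i => Function.surjInv D.rHom_surj (τ i))) γ = 0
    refine hsmul_inj _ 0 ?_
    rw [zero_smul, ← hzero]
    have hmrg : ∀ i : Fin (K + 1),
        Φ
            (fun j => if (j : ℕ) < (i : ℕ) then Function.surjInv D.rHom_surj (γ (Fin.castSucc j))
              else if (j : ℕ) = (i : ℕ) then
                Function.surjInv D.rHom_surj (γ (Fin.castSucc j))
                  * Function.surjInv D.rHom_surj (γ j.succ)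
              else Function.surjInv D.rHom_surj (γ j.succ))
          = cval (fun j => Function.surjInv D.rHom_surj
              (if (j : ℕ) < (i : ℕ) then γ (Fin.castSucc j)
                else if (j : ℕ) = (i : ℕ) then γ (Fin.castSucc j) * γ j.succ
                else γ j.succ)) • D.oneF := by
      intro i
      refine key _ _ ?_
      intro j
      split_ifs
      · exact hs _
      · rw [map_mul, hs, hs]
      · exact hs _
    simp only [rdel, gd, smul_eq_mul]
    rw [key (fun i => Function.surjInv D.rHom_surj (γ i.succ)) (fun i => γ i.succ)
        (fun i => hs _),
      key (fun j => Function.surjInv D.rHom_surj (γ (Fin.castSucc j)))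
        (fun j => γ (Fin.castSucc j)) (fun j => hs _)]
    have hsum : (∑ i : Fin (K + 1), ((-1 : ℝ) ^ ((i : ℕ) + 1)) •
          Φ
            (fun j => if (j : ℕ) < (i : ℕ) then Function.surjInv D.rHom_surj (γ (Fin.castSucc j))
              else if (j : ℕ) = (i : ℕ) then
                Function.surjInv D.rHom_surj (γ (Fin.castSucc j))
                  * Function.surjInv D.rHom_surj (γ j.succ)
              else Function.surjInv D.rHom_surj (γ j.succ)))
        = ∑ i : Fin (K + 1), ((-1 : ℝ) ^ ((i : ℕ) + 1)) •
            (cval (fun j => Function.surjInv D.rHom_surj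
              (if (j : ℕ) < (i : ℕ) then γ (Fin.castSucc j)
                else if (j : ℕ) = (i : ℕ) then γ (Fin.castSucc j) * γ j.succ
                else γ j.succ)) • D.oneF) :=
      Finset.sum_congr rfl fun i _ => by rw [hmrg i]
    rw [hsum]
    simp only [map_smul, D.pull_oneF, add_smul, Finset.sum_smul, smul_smul]
  · -- uniqueness
    intro χ' hχ'
    funext γ
    have h1 := hχ' (fun i => Function.surjInv D.rHom_surj (γ i))
    rw [hDh] at h1
    have h3' : χ' (fun i => D.rHom (Function.surjInv D.rHom_surj (γ i))) • D.oneF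
        = cval (fun i => Function.surjInv D.rHom_surj (γ i)) • D.oneF := by
      rw [← h1]
      exact hcval _
    have h4 := hsmul_inj _ _ h3'
    have h5 : (fun i => D.rHom (Function.surjInv D.rHom_surj (γ i))) = γ :=
      funext fun i => hs _
    rw [h5] at h4
    exact h4


end TsuboiEuler
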